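/- Suppose V̂ : [0,T] × ℝ^d → ℝ^d satisfies V̂(t, Px) = Qx + V̂(t,x) for all (t,x) ∈ [0,T] × ℝ^d, where P ∈ ℝ^{d×d} and Q := I − P, and suppose there exist constants L̂, C₀ > 0 and γ ≥ 1 such that |V̂(t,u) − V̂(s,v)| ≤ L̂ |u − v| + C₀ (1 + |u| + |v|)^γ |t − s| for all s, t ∈ [0,T] and u, v ∈ ℝ^d. Then there exists a constant C > 0 such that for all s, t ∈ [0,T] and u, v ∈ ℝ^d: |(u + V̂(t,u)) − (v + V̂(s,v))| ≤ (1 + L̂) |Pu − Pv| + C (1 + |Pu| + |Pv|)^γ |t − s|. -/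
import Mathlib


open Matrix

/-- Euclidean norm of a vector in `ℝ^d`. -/
noncomputable def vnorm {d : ℕ} (x : Fin d → ℝ) : ℝ :=
  Real.sqrt (∑ i, (x i) ^ 2)

lemma vnorm_eq_norm {d : ℕ} (x : Fin d → ℝ) :
    vnorm x = ‖(WithLp.equiv 2 (Fin d → ℝ)).symm x‖ := by
  rw [EuclideanSpace.norm_eq]
  simp [vnorm, sq_abs]

lemma vnorm_add_le {d : ℕ} (a b : Fin d → ℝ) :
    vnorm (a + b) ≤ vnorm a + vnorm b := by
  simp only [vnorm_eq_norm]
  rw [show (WithLp.equiv 2 (Fin d → ℝ)).symm (a + b)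
      = (WithLp.equiv 2 (Fin d → ℝ)).symm a + (WithLp.equiv 2 (Fin d → ℝ)).symm b from rfl]
  exact norm_add_le _ _

theorem stmt5 (T : ℝ) (hT : 0 < T) (d : ℕ) (hd : 1 ≤ d)
    (Lhat C0 γ : ℝ) (hLhat : 0 < Lhat) (hC0 : 0 < C0) (hγ : 1 ≤ γ)
    (P : Matrix (Fin d) (Fin d) ℝ)
    (V : ℝ → (Fin d → ℝ) → Fin d → ℝ)
    -- `V̂(t, Px) = Qx + V̂(t,x)` with `Q = I − P`
    (hPQ : ∀ t ∈ Set.Icc (0:ℝ) T, ∀ x : Fin d → ℝ,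
      V t (P.mulVec x) = (1 - P).mulVec x + V t x)
    -- `|V̂(t,u) − V̂(s,v)| ≤ L̂ |u − v| + C₀ (1 + |u| + |v|)^γ |t − s|`
    (hlip : ∀ s ∈ Set.Icc (0:ℝ) T, ∀ t ∈ Set.Icc (0:ℝ) T, ∀ u v : Fin d → ℝ,
      vnorm (V t u - V s v) ≤
        Lhat * vnorm (u - v) + C0 * (1 + vnorm u + vnorm v) ^ γ * |t - s|) :
    ∃ C > 0, ∀ s ∈ Set.Icc (0:ℝ) T, ∀ t ∈ Set.Icc (0:ℝ) T, ∀ u v : Fin d → ℝ,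
      vnorm ((u + V t u) - (v + V s v)) ≤
        (1 + Lhat) * vnorm (P.mulVec u - P.mulVec v) +
        C * (1 + vnorm (P.mulVec u) + vnorm (P.mulVec v)) ^ γ * |t - s| := by
  refine ⟨C0, hC0, fun s hs t ht u v => ?_⟩
  have key : ∀ τ ∈ Set.Icc (0:ℝ) T, ∀ x : Fin d → ℝ,
      x + V τ x = P.mulVec x + V τ (P.mulVec x) := by
    intro τ hτ x
    rw [hPQ τ hτ x, sub_mulVec, one_mulVec]
    abel
  rw [key t ht u, key s hs v]
  have heq : (P.mulVec u + V t (P.mulVec u)) - (P.mulVec v + V s (P.mulVec v))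
      = (P.mulVec u - P.mulVec v) + (V t (P.mulVec u) - V s (P.mulVec v)) := by
    abel
  rw [heq]
  calc vnorm ((P.mulVec u - P.mulVec v) + (V t (P.mulVec u) - V s (P.mulVec v)))
      ≤ vnorm (P.mulVec u - P.mulVec v) + vnorm (V t (P.mulVec u) - V s (P.mulVec v)) :=
        vnorm_add_le _ _
    _ ≤ vnorm (P.mulVec u - P.mulVec v) +
        (Lhat * vnorm (P.mulVec u - P.mulVec v) +
          C0 * (1 + vnorm (P.mulVec u) + vnorm (P.mulVec v)) ^ γ * |t - s|) := by
        have := hlip s hs t ht (P.mulVec u) (P.mulVec v)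
        linarith
    _ = (1 + Lhat) * vnorm (P.mulVec u - P.mulVec v) +
        C0 * (1 + vnorm (P.mulVec u) + vnorm (P.mulVec v)) ^ γ * |t - s| := by ring
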